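/- One-soliton verification for the KdV equation with one self-consistent source: u(x,t) = 2k² sech²(θ) and φ₁(x,t) = (1/2)√(2k) sech(θ), with θ = kx − k³t − (α/2)t + x₀, satisfy u_t = −(1/4)(6 u u_x + u_xxx) − 2α ∂_x(φ₁²) and φ₁_xx + (−k² + u)φ₁ = 0. -/

import Mathlib

private lemma sech1_hasDerivAt {L : ℝ → ℝ} {m x : ℝ} (hL : HasDerivAt L m x) :
    HasDerivAt (fun y => 1 / Real.cosh (L y))
      (-(m * Real.sinh (L x)) * (1 / Real.cosh (L x)) ^ 2) x := by
  have hne : Real.cosh (L x) ≠ 0 := (Real.cosh_pos _).ne'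
  have h := (hL.cosh).inv hne
  simp only [one_div]
  refine h.congr_deriv ?_
  field_simp

private lemma sech_pow_hasDerivAt {L : ℝ → ℝ} {m x : ℝ} (hL : HasDerivAt L m x) (n : ℕ) :
    HasDerivAt (fun y => (1 / Real.cosh (L y)) ^ n)
      (-((n : ℝ) * m * Real.sinh (L x)) * (1 / Real.cosh (L x)) ^ (n + 1)) x := by
  have hne : Real.cosh (L x) ≠ 0 := (Real.cosh_pos _).ne'
  cases n with
  | zero => simpa using hasDerivAt_const x (1 : ℝ)
  | succ p =>
    have h := (sech1_hasDerivAt hL).pow (p + 1)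
    refine h.congr_deriv ?_
    have hp : p + 1 - 1 = p := rfl
    rw [hp]
    push_cast
    field_simp
    simp only [one_div, inv_pow, pow_succ]
    field_simp


private lemma kdv_key1 (k α S C A : ℝ) (hc : C ≠ 0) (hs : S ^ 2 = C ^ 2 - 1)
    (hA : A ^ 2 = 2 * k) :
    2 * k ^ 2 * (-(2 * (-(k ^ 3) - α / 2) * S) * (1 / C) ^ 3)
      = -(1 / 4) * (6 * (2 * k ^ 2 * (1 / C) ^ 2) * (2 * k ^ 2 * (-(2 * k * S) * (1 / C) ^ 3))
          + 2 * k ^ 2 * ((-(2 * k * (S * k * k)) * (1 / C) ^ 3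
              + -(2 * k * (C * k)) * (-(3 * k * S) * (1 / C) ^ 4))
            + (-(2 * k * (C * k)) * (-(3 * k * S) * (1 / C) ^ 4)
              + -(2 * k * S) * (-(3 * k * (C * k)) * (1 / C) ^ 4
                + -(3 * k * S) * (-(4 * k * S) * (1 / C) ^ 5)))))
        - 2 * α * (2 * (1 / 2 * A * (1 / C)) ^ 1 * (1 / 2 * A * (-(k * S) * (1 / C) ^ 2))) := by
  field_simp
  linear_combination (-48 * k ^ 5 * S) * hs + (-4 * k * α * S * C ^ 2) * hA

private lemma kdv_key2 (k S C A : ℝ) (hc : C ≠ 0) (hs : S ^ 2 = C ^ 2 - 1) :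
    1 / 2 * A * (-(k * (C * k)) * (1 / C) ^ 2 + -(k * S) * (-(2 * k * S) * (1 / C) ^ 3))
      + (-(k ^ 2) + 2 * k ^ 2 * (1 / C) ^ 2) * (1 / 2 * A * (1 / C)) = 0 := by
  field_simp
  linear_combination (2 * A * k ^ 2) * hs

/-- One-soliton verification for the KdV equation with one self-consistent source. -/
theorem kdv_one_soliton_with_source
    (k α x₀ : ℝ) (hk : 0 < k)
    (θ u φ : ℝ → ℝ → ℝ)
    (hθ : θ = fun x t => k * x - k ^ 3 * t - (α / 2) * t + x₀)
    (hu : u = fun x t => 2 * k ^ 2 * (1 / Real.cosh (θ x t)) ^ 2)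
    (hφ : φ = fun x t => (1 / 2) * Real.sqrt (2 * k) * (1 / Real.cosh (θ x t))) :
    (∀ x t, deriv (fun s => u x s) t
      = -(1 / 4) * (6 * u x t * deriv (fun y => u y t) x
          + deriv (deriv (deriv (fun y => u y t))) x)
        - 2 * α * deriv (fun y => (φ y t) ^ 2) x) ∧
    (∀ x t, deriv (deriv (fun y => φ y t)) x + (-(k ^ 2) + u x t) * φ x t = 0) := by
  subst hθ hu hφ
  have h2k : Real.sqrt (2 * k) ^ 2 = 2 * k := Real.sq_sqrt (by positivity)
  constructor
  · intro x t
    simp only []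
    have hLx : ∀ z : ℝ, HasDerivAt (fun y : ℝ => k * y - k ^ 3 * t - α / 2 * t + x₀) k z :=
      fun z => by
        simpa using ((((hasDerivAt_id z).const_mul k).sub_const (k ^ 3 * t)).sub_const
          (α / 2 * t)).add_const x₀
    have hLt : HasDerivAt (fun s : ℝ => k * x - k ^ 3 * s - α / 2 * s + x₀)
        (-(k ^ 3) - α / 2) t := by
      simpa using (((hasDerivAt_const t (k * x)).sub ((hasDerivAt_id t).const_mul (k ^ 3))).sub
        ((hasDerivAt_id t).const_mul (α / 2))).add_const x₀
    have hUt : HasDerivAt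
        (fun s => 2 * k ^ 2 * (1 / Real.cosh (k * x - k ^ 3 * s - α / 2 * s + x₀)) ^ 2)
        (2 * k ^ 2 * (-(2 * (-(k ^ 3) - α / 2) *
          Real.sinh (k * x - k ^ 3 * t - α / 2 * t + x₀)) *
          (1 / Real.cosh (k * x - k ^ 3 * t - α / 2 * t + x₀)) ^ 3)) t :=
      (sech_pow_hasDerivAt hLt 2).const_mul (2 * k ^ 2)
    have e1 : deriv (fun y => 2 * k ^ 2 *
          (1 / Real.cosh (k * y - k ^ 3 * t - α / 2 * t + x₀)) ^ 2)
        = fun z => 2 * k ^ 2 * (-(2 * k * Real.sinh (k * z - k ^ 3 * t - α / 2 * t + x₀)) *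
            (1 / Real.cosh (k * z - k ^ 3 * t - α / 2 * t + x₀)) ^ 3) :=
      funext fun z =>
        (((sech_pow_hasDerivAt (hLx z) 2).const_mul (2 * k ^ 2)) :
          HasDerivAt _ (2 * k ^ 2 * (-(2 * k * Real.sinh (k * z - k ^ 3 * t - α / 2 * t + x₀)) *
            (1 / Real.cosh (k * z - k ^ 3 * t - α / 2 * t + x₀)) ^ 3)) z).deriv
    have e2 : deriv (fun z => 2 * k ^ 2 *
          (-(2 * k * Real.sinh (k * z - k ^ 3 * t - α / 2 * t + x₀)) *
            (1 / Real.cosh (k * z - k ^ 3 * t - α / 2 * t + x₀)) ^ 3))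
        = fun z => 2 * k ^ 2 *
            (-(2 * k * (Real.cosh (k * z - k ^ 3 * t - α / 2 * t + x₀) * k)) *
              (1 / Real.cosh (k * z - k ^ 3 * t - α / 2 * t + x₀)) ^ 3
            + -(2 * k * Real.sinh (k * z - k ^ 3 * t - α / 2 * t + x₀)) *
              (-(3 * k * Real.sinh (k * z - k ^ 3 * t - α / 2 * t + x₀)) *
                (1 / Real.cosh (k * z - k ^ 3 * t - α / 2 * t + x₀)) ^ 4)) :=
      funext fun z =>
        (((((hLx z).sinh.const_mul (2 * k)).neg.mul
            (sech_pow_hasDerivAt (hLx z) 3)).const_mul (2 * k ^ 2) :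
          HasDerivAt _ (2 * k ^ 2 *
            (-(2 * k * (Real.cosh (k * z - k ^ 3 * t - α / 2 * t + x₀) * k)) *
              (1 / Real.cosh (k * z - k ^ 3 * t - α / 2 * t + x₀)) ^ 3
            + -(2 * k * Real.sinh (k * z - k ^ 3 * t - α / 2 * t + x₀)) *
              (-(3 * k * Real.sinh (k * z - k ^ 3 * t - α / 2 * t + x₀)) *
                (1 / Real.cosh (k * z - k ^ 3 * t - α / 2 * t + x₀)) ^ 4))) z)).deriv
    have hG2 : HasDerivAt (fun z => 2 * k ^ 2 *
            (-(2 * k * (Real.cosh (k * z - k ^ 3 * t - α / 2 * t + x₀) * k)) *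
              (1 / Real.cosh (k * z - k ^ 3 * t - α / 2 * t + x₀)) ^ 3
            + -(2 * k * Real.sinh (k * z - k ^ 3 * t - α / 2 * t + x₀)) *
              (-(3 * k * Real.sinh (k * z - k ^ 3 * t - α / 2 * t + x₀)) *
                (1 / Real.cosh (k * z - k ^ 3 * t - α / 2 * t + x₀)) ^ 4)))
        (2 * k ^ 2 *
          ((-(2 * k * (Real.sinh (k * x - k ^ 3 * t - α / 2 * t + x₀) * k * k)) *
              (1 / Real.cosh (k * x - k ^ 3 * t - α / 2 * t + x₀)) ^ 3
            + -(2 * k * (Real.cosh (k * x - k ^ 3 * t - α / 2 * t + x₀) * k)) *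
              (-(3 * k * Real.sinh (k * x - k ^ 3 * t - α / 2 * t + x₀)) *
                (1 / Real.cosh (k * x - k ^ 3 * t - α / 2 * t + x₀)) ^ 4))
          + (-(2 * k * (Real.cosh (k * x - k ^ 3 * t - α / 2 * t + x₀) * k)) *
              (-(3 * k * Real.sinh (k * x - k ^ 3 * t - α / 2 * t + x₀)) *
                (1 / Real.cosh (k * x - k ^ 3 * t - α / 2 * t + x₀)) ^ 4)
            + -(2 * k * Real.sinh (k * x - k ^ 3 * t - α / 2 * t + x₀)) *
              (-(3 * k * (Real.cosh (k * x - k ^ 3 * t - α / 2 * t + x₀) * k)) *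
                (1 / Real.cosh (k * x - k ^ 3 * t - α / 2 * t + x₀)) ^ 4
              + -(3 * k * Real.sinh (k * x - k ^ 3 * t - α / 2 * t + x₀)) *
                (-(4 * k * Real.sinh (k * x - k ^ 3 * t - α / 2 * t + x₀)) *
                  (1 / Real.cosh (k * x - k ^ 3 * t - α / 2 * t + x₀)) ^ 5))))) x :=
      (((((hLx x).cosh.mul_const k).const_mul (2 * k)).neg.mul
          (sech_pow_hasDerivAt (hLx x) 3)).add
        ((((hLx x).sinh.const_mul (2 * k)).neg).mul
          ((((hLx x).sinh.const_mul (3 * k)).neg).mul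
            (sech_pow_hasDerivAt (hLx x) 4)))).const_mul (2 * k ^ 2)
    have hPhisq : HasDerivAt
        (fun y => (1 / 2 * Real.sqrt (2 * k) *
          (1 / Real.cosh (k * y - k ^ 3 * t - α / 2 * t + x₀))) ^ 2)
        (2 * (1 / 2 * Real.sqrt (2 * k) *
            (1 / Real.cosh (k * x - k ^ 3 * t - α / 2 * t + x₀))) ^ 1 *
          (1 / 2 * Real.sqrt (2 * k) *
            (-(k * Real.sinh (k * x - k ^ 3 * t - α / 2 * t + x₀)) *
              (1 / Real.cosh (k * x - k ^ 3 * t - α / 2 * t + x₀)) ^ 2))) x :=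
      ((sech1_hasDerivAt (hLx x)).const_mul (1 / 2 * Real.sqrt (2 * k))).pow 2
    rw [hUt.deriv, e1, e2, hG2.deriv, hPhisq.deriv]
    have hc : Real.cosh (k * x - k ^ 3 * t - α / 2 * t + x₀) ≠ 0 := (Real.cosh_pos _).ne'
    have hs : Real.sinh (k * x - k ^ 3 * t - α / 2 * t + x₀) ^ 2 =
        Real.cosh (k * x - k ^ 3 * t - α / 2 * t + x₀) ^ 2 - 1 := Real.sinh_sq _
    exact kdv_key1 k α _ _ _ hc hs h2k
  · intro x t
    simp only []
    have hLx : ∀ z : ℝ, HasDerivAt (fun y : ℝ => k * y - k ^ 3 * t - α / 2 * t + x₀) k z :=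
      fun z => by
        simpa using ((((hasDerivAt_id z).const_mul k).sub_const (k ^ 3 * t)).sub_const
          (α / 2 * t)).add_const x₀
    have e1 : deriv (fun y => 1 / 2 * Real.sqrt (2 * k) *
          (1 / Real.cosh (k * y - k ^ 3 * t - α / 2 * t + x₀)))
        = fun z => 1 / 2 * Real.sqrt (2 * k) *
            (-(k * Real.sinh (k * z - k ^ 3 * t - α / 2 * t + x₀)) *
              (1 / Real.cosh (k * z - k ^ 3 * t - α / 2 * t + x₀)) ^ 2) :=
      funext fun z =>
        (((sech1_hasDerivAt (hLx z)).const_mul (1 / 2 * Real.sqrt (2 * k))) :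
          HasDerivAt _ (1 / 2 * Real.sqrt (2 * k) *
            (-(k * Real.sinh (k * z - k ^ 3 * t - α / 2 * t + x₀)) *
              (1 / Real.cosh (k * z - k ^ 3 * t - α / 2 * t + x₀)) ^ 2)) z).deriv
    have h2 : HasDerivAt (fun z => 1 / 2 * Real.sqrt (2 * k) *
            (-(k * Real.sinh (k * z - k ^ 3 * t - α / 2 * t + x₀)) *
              (1 / Real.cosh (k * z - k ^ 3 * t - α / 2 * t + x₀)) ^ 2))
        (1 / 2 * Real.sqrt (2 * k) *
          (-(k * (Real.cosh (k * x - k ^ 3 * t - α / 2 * t + x₀) * k)) *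
            (1 / Real.cosh (k * x - k ^ 3 * t - α / 2 * t + x₀)) ^ 2
          + -(k * Real.sinh (k * x - k ^ 3 * t - α / 2 * t + x₀)) *
            (-(2 * k * Real.sinh (k * x - k ^ 3 * t - α / 2 * t + x₀)) *
              (1 / Real.cosh (k * x - k ^ 3 * t - α / 2 * t + x₀)) ^ 3))) x :=
      ((((hLx x).sinh.const_mul k).neg.mul
        (sech_pow_hasDerivAt (hLx x) 2)).const_mul (1 / 2 * Real.sqrt (2 * k)))
    rw [e1, h2.deriv]
    have hc : Real.cosh (k * x - k ^ 3 * t - α / 2 * t + x₀) ≠ 0 := (Real.cosh_pos _).ne'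
    have hs : Real.sinh (k * x - k ^ 3 * t - α / 2 * t + x₀) ^ 2 =
        Real.cosh (k * x - k ^ 3 * t - α / 2 * t + x₀) ^ 2 - 1 := Real.sinh_sq _
    exact kdv_key2 k _ _ _ hc hs
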